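/- Let R̃ : ℝ → SO(3) satisfy R̃̇ = R̃[Ω]_× - [Ω]_× R̃ - R̃[C]_×. Then d/dt ||R̃||_I = -(1/2) Υ(R̃)ᵀ C, where ||R̃||_I = (1/4)Tr(I₃ - R̃) and Υ(R̃) = vex(P_a(R̃)). -/

import Mathlib

open Matrix Real

noncomputable def skew (a : Fin 3 → ℝ) : Matrix (Fin 3) (Fin 3) ℝ :=
  !![0, -a 2, a 1; a 2, 0, -a 0; -a 1, a 0, 0]

noncomputable def Pa (M : Matrix (Fin 3) (Fin 3) ℝ) : Matrix (Fin 3) (Fin 3) ℝ :=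
  (1/2 : ℝ) • (M - Mᵀ)

/-- inverse of the skew map (on skew-symmetric matrices) -/
noncomputable def vex (M : Matrix (Fin 3) (Fin 3) ℝ) : Fin 3 → ℝ :=
  ![M 2 1, M 0 2, M 1 0]

noncomputable def Ups (M : Matrix (Fin 3) (Fin 3) ℝ) : Fin 3 → ℝ := vex (Pa M)

noncomputable def normI (M : Matrix (Fin 3) (Fin 3) ℝ) : ℝ :=
  (1/4) * Matrix.trace (1 - M)

def SO3 (R : Matrix (Fin 3) (Fin 3) ℝ) : Prop := Rᵀ * R = 1 ∧ R.det = 1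

theorem stmt5 (Rt : ℝ → Matrix (Fin 3) (Fin 3) ℝ) (Ω C : ℝ → Fin 3 → ℝ)
    (hSO : ∀ t, SO3 (Rt t))
    (hR : ∀ t i j, HasDerivAt (fun s => Rt s i j)
      ((Rt t * skew (Ω t) - skew (Ω t) * Rt t - Rt t * skew (C t)) i j) t) :
    ∀ t, HasDerivAt (fun s => normI (Rt s))
      (-(1/2) * ∑ i, Ups (Rt t) i * C t i) t := by
  intro t
  have hsum : HasDerivAt (fun s => ∑ i, Rt s i i)
      (∑ i, (Rt t * skew (Ω t) - skew (Ω t) * Rt t - Rt t * skew (C t)) i i) t :=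
    HasDerivAt.fun_sum (fun i _ => hR t i i)
  have h : HasDerivAt (fun s => (1/4 : ℝ) * ((3:ℝ) - ∑ i, Rt s i i))
      ((1/4 : ℝ) * ((0:ℝ) - ∑ i, (Rt t * skew (Ω t) - skew (Ω t) * Rt t - Rt t * skew (C t)) i i)) t :=
    ((hasDerivAt_const t (3:ℝ)).sub hsum).const_mul (1/4)
  have hfun : (fun s => normI (Rt s)) = fun s => (1/4 : ℝ) * ((3:ℝ) - ∑ i, Rt s i i) := by
    funext s
    simp [normI, Matrix.trace, Matrix.diag, Fin.sum_univ_three, Matrix.one_apply]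
  rw [hfun]
  convert h using 1
  simp [Ups, vex, Pa, skew, Fin.sum_univ_three, Matrix.mul_apply, Matrix.sub_apply,
    Matrix.transpose_apply, Matrix.vecMul, dotProduct]
  ring
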